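/- For every constant c₀ > 0, the transmission-energy function t ↦ t·f(c₀/t), where f(x) = N₀·(2^{x/B} − 1), is strictly decreasing on (0, ∞). -/

import Mathlib

open Real Set

/-- For every constant `c₀ > 0`, the transmission-energy function
`t ↦ t f(c₀/t)`, with `f(x) = N₀(2^{x/B}−1)`, is strictly decreasing on `(0, ∞)`. -/
theorem transmission_energy_decreasing_in_time
    (N0 B : ℝ) (hN0 : 0 < N0) (hB : 0 < B) :
    ∀ c₀ : ℝ, 0 < c₀ →
      StrictAntiOn (fun t : ℝ => t * (N0 * ((2 : ℝ) ^ (c₀ / t / B) - 1))) (Ioi 0) := by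
  intro c₀ hc₀
  have key : ∀ t : ℝ, 0 < t → HasDerivAt (fun t : ℝ => t * (N0 * ((2 : ℝ) ^ (c₀ / t / B) - 1)))
      (1 * (N0 * ((2:ℝ) ^ (c₀ / t / B) - 1)) +
        t * (N0 * ((2:ℝ) ^ (c₀ / t / B) * Real.log 2 * (-(c₀ / B) / t ^ 2)))) t := by
    intro t ht
    have h1 : HasDerivAt (fun t : ℝ => c₀ / t / B) (-(c₀ / B) / t ^ 2) t := by
      have h0 : HasDerivAt (fun t : ℝ => (c₀ / B) * t⁻¹) ((c₀ / B) * (-(t ^ 2)⁻¹)) t :=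
        (hasDerivAt_inv ht.ne').const_mul _
      have e1 : (fun t : ℝ => c₀ / t / B) = fun t : ℝ => (c₀ / B) * t⁻¹ := by
        funext s; field_simp
      rw [e1]
      convert h0 using 1; field_simp
    have h2 : HasDerivAt (fun t : ℝ => (2:ℝ) ^ (c₀ / t / B))
        ((2:ℝ) ^ (c₀ / t / B) * Real.log 2 * (-(c₀ / B) / t ^ 2)) t :=
      (Real.hasStrictDerivAt_const_rpow (by norm_num) _).hasDerivAt.comp t h1
    have h3 : HasDerivAt (fun t : ℝ => N0 * ((2:ℝ) ^ (c₀ / t / B) - 1))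
        (N0 * ((2:ℝ) ^ (c₀ / t / B) * Real.log 2 * (-(c₀ / B) / t ^ 2))) t :=
      ((h2.sub_const 1).const_mul N0)
    exact (hasDerivAt_id t).mul h3
  apply strictAntiOn_of_deriv_neg (convex_Ioi 0)
  · exact continuousOn_of_forall_continuousAt fun t ht => ((key t ht).continuousAt)
  · intro t ht
    rw [interior_Ioi] at ht
    rw [(key t ht).deriv]
    set u := c₀ / t / B with hu
    have hupos : 0 < u := div_pos (div_pos hc₀ ht) hB
    have hy : 0 < u * Real.log 2 := mul_pos hupos (Real.log_pos one_lt_two)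
    -- key inequality: 2^u - 1 < u * log 2 * 2^u
    have hexp : (2:ℝ) ^ u = Real.exp (u * Real.log 2) := by
      rw [Real.rpow_def_of_pos (by norm_num), mul_comm]
    have hineq : (2:ℝ) ^ u - 1 < (u * Real.log 2) * (2:ℝ) ^ u := by
      have h := Real.add_one_lt_exp (neg_ne_zero.mpr hy.ne')
      rw [Real.exp_neg] at h
      have h2 := mul_lt_mul_of_pos_left h (Real.exp_pos (u * Real.log 2))
      rw [mul_inv_cancel₀ (Real.exp_pos _).ne'] at h2
      rw [hexp]
      nlinarith
    have htp : (0:ℝ) < t := ht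
    have hrduce : t * (N0 * ((2:ℝ) ^ u * Real.log 2 * (-(c₀ / B) / t ^ 2)))
        = -(N0 * ((u * Real.log 2) * (2:ℝ) ^ u)) := by
      rw [hu]
      field_simp
    rw [hrduce]
    nlinarith [mul_lt_mul_of_pos_left hineq hN0]
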